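/- For any K×K symmetric positive-definite matrix Σ and α ∈ ℝ^K, the function V(q) = αᵀ(Σ⁻¹ + diag(q))⁻¹α is decreasing in each coordinate and convex on the domain q ∈ ℝ_{≥0}^K. -/

import Mathlib

open Matrix

lemma sym_of_posdef {K : ℕ} {M : Matrix (Fin K) (Fin K) ℝ} (hM : M.PosDef) : Mᵀ = M := by
  exact (by simpa using hM.isHermitian : M.IsSymm)

lemma mz_eq {K : ℕ} {M : Matrix (Fin K) (Fin K) ℝ} (hM : M.PosDef) (α : Fin K → ℝ) :
    M *ᵥ (M⁻¹ *ᵥ α) = α := by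
  letI := hM.isUnit.invertible
  rw [mulVec_mulVec, Matrix.mul_inv_of_invertible, one_mulVec]

lemma key_ineq {K : ℕ} {M : Matrix (Fin K) (Fin K) ℝ} (hM : M.PosDef) (α x : Fin K → ℝ) :
    2 * (α ⬝ᵥ x) - x ⬝ᵥ (M *ᵥ x) ≤ α ⬝ᵥ (M⁻¹ *ᵥ α) := by
  set z := M⁻¹ *ᵥ α with hz
  have hMz : M *ᵥ z = α := mz_eq hM α
  have h0 : 0 ≤ (x - z) ⬝ᵥ (M *ᵥ (x - z)) := by
    simpa using hM.posSemidef.dotProduct_mulVec_nonneg (x - z)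
  have h2 : z ⬝ᵥ (M *ᵥ x) = α ⬝ᵥ x := by
    rw [dotProduct_mulVec, ← mulVec_transpose, sym_of_posdef hM, hMz]
  have h3 : x ⬝ᵥ (M *ᵥ z) = α ⬝ᵥ x := by rw [hMz, dotProduct_comm]
  have h4 : z ⬝ᵥ (M *ᵥ z) = α ⬝ᵥ (M⁻¹ *ᵥ α) := by rw [hMz, dotProduct_comm]
  have expand : (x - z) ⬝ᵥ (M *ᵥ (x - z))
      = x ⬝ᵥ (M *ᵥ x) - 2 * (α ⬝ᵥ x) + α ⬝ᵥ (M⁻¹ *ᵥ α) := by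
    simp [mulVec_sub, dotProduct_sub, sub_dotProduct, h2, h3, h4]
    ring
  linarith [expand ▸ h0]

lemma key_eq {K : ℕ} {M : Matrix (Fin K) (Fin K) ℝ} (hM : M.PosDef) (α : Fin K → ℝ) :
    α ⬝ᵥ (M⁻¹ *ᵥ α)
      = 2 * (α ⬝ᵥ (M⁻¹ *ᵥ α)) - (M⁻¹ *ᵥ α) ⬝ᵥ (M *ᵥ (M⁻¹ *ᵥ α)) := by
  have h4 : (M⁻¹ *ᵥ α) ⬝ᵥ (M *ᵥ (M⁻¹ *ᵥ α)) = α ⬝ᵥ (M⁻¹ *ᵥ α) := by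
    rw [mz_eq hM α, dotProduct_comm]
  rw [h4]; ring

lemma Mq_posdef {K : ℕ} {S : Matrix (Fin K) (Fin K) ℝ} (hS : S.PosDef)
    {q : Fin K → ℝ} (hq : ∀ i, 0 ≤ q i) : (S⁻¹ + diagonal q).PosDef :=
  hS.inv.add_posSemidef (posSemidef_diagonal_iff.mpr hq)

theorem stmt_3 {K : ℕ} (S : Matrix (Fin K) (Fin K) ℝ) (hS : S.PosDef)
    (α : Fin K → ℝ) :
    (∀ q q' : Fin K → ℝ, (∀ i, 0 ≤ q i) → (∀ i, q i ≤ q' i) →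
      α ⬝ᵥ ((S⁻¹ + diagonal q')⁻¹ *ᵥ α) ≤ α ⬝ᵥ ((S⁻¹ + diagonal q)⁻¹ *ᵥ α)) ∧
    ConvexOn ℝ {q : Fin K → ℝ | ∀ i, 0 ≤ q i}
      (fun q => α ⬝ᵥ ((S⁻¹ + diagonal q)⁻¹ *ᵥ α)) := by
  constructor
  · intro q q' hq hle
    have hq' : ∀ i, 0 ≤ q' i := fun i => (hq i).trans (hle i)
    have hM : (S⁻¹ + diagonal q).PosDef := Mq_posdef hS hq
    have hM' : (S⁻¹ + diagonal q').PosDef := Mq_posdef hS hq'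
    set z := (S⁻¹ + diagonal q')⁻¹ *ᵥ α with hzdef
    have hdec : (S⁻¹ + diagonal q') = (S⁻¹ + diagonal q) + diagonal (q' - q) := by
      ext i j
      by_cases h : i = j <;> simp [Matrix.add_apply, h]
    have hpos : 0 ≤ z ⬝ᵥ (diagonal (q' - q) *ᵥ z) := by
      simpa using (posSemidef_diagonal_iff.mpr
        (fun i => sub_nonneg.2 (hle i)) : (diagonal (q' - q)).PosSemidef).dotProduct_mulVec_nonneg z
    have hsplit : z ⬝ᵥ ((S⁻¹ + diagonal q') *ᵥ z)
        = z ⬝ᵥ ((S⁻¹ + diagonal q) *ᵥ z) + z ⬝ᵥ (diagonal (q' - q) *ᵥ z) := by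
      rw [hdec, add_mulVec, dotProduct_add]
    have heq := key_eq hM' α
    have hk := key_ineq hM α z
    linarith
  · constructor
    · intro q hq q' hq' a b ha hb hab i
      have : (a • q + b • q') i = a * q i + b * q' i := by
        simp [smul_eq_mul]
      rw [this]
      exact add_nonneg (mul_nonneg ha (hq i)) (mul_nonneg hb (hq' i))
    · intro q hq q' hq' a b ha hb hab
      simp only [smul_eq_mul, Set.mem_setOf_eq] at *
      have hr : ∀ i, 0 ≤ (a • q + b • q') i := by
        intro i
        have : (a • q + b • q') i = a * q i + b * q' i := by simp [smul_eq_mul]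
        rw [this]
        exact add_nonneg (mul_nonneg ha (hq i)) (mul_nonneg hb (hq' i))
      have hMr : (S⁻¹ + diagonal (a • q + b • q')).PosDef := Mq_posdef hS hr
      have hMq : (S⁻¹ + diagonal q).PosDef := Mq_posdef hS hq
      have hMq' : (S⁻¹ + diagonal q').PosDef := Mq_posdef hS hq'
      set z := (S⁻¹ + diagonal (a • q + b • q'))⁻¹ *ᵥ α with hzdef
      have hdec : (S⁻¹ + diagonal (a • q + b • q'))
          = a • (S⁻¹ + diagonal q) + b • (S⁻¹ + diagonal q') := by
        ext i j
        by_cases h : i = j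
        · simp [Matrix.add_apply, Matrix.smul_apply, smul_eq_mul, h]
          linear_combination (-(S⁻¹ j j)) * hab
        · simp [Matrix.add_apply, Matrix.smul_apply, smul_eq_mul, h]
          linear_combination (-(S⁻¹ i j)) * hab
      have hsplit : z ⬝ᵥ ((S⁻¹ + diagonal (a • q + b • q')) *ᵥ z)
          = a * (z ⬝ᵥ ((S⁻¹ + diagonal q) *ᵥ z))
            + b * (z ⬝ᵥ ((S⁻¹ + diagonal q') *ᵥ z)) := by
        rw [hdec, add_mulVec, dotProduct_add, smul_mulVec, smul_mulVec,
          dotProduct_smul, dotProduct_smul, smul_eq_mul, smul_eq_mul]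
      have heq := key_eq hMr α
      have hk1 := key_ineq hMq α z
      have hk2 := key_ineq hMq' α z
      rw [← hzdef] at heq
      have habz : a * (α ⬝ᵥ z) + b * (α ⬝ᵥ z) = α ⬝ᵥ z := by
        rw [← add_mul, hab, one_mul]
      nlinarith [mul_le_mul_of_nonneg_left hk1 ha, mul_le_mul_of_nonneg_left hk2 hb, habz]
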